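/- For a fixed degraded channel cascade X → Y → Z with finite alphabets, the function Γ[R] = max{ I(X;Y) − I(X;Z) : P_X with I(X;Y) ≥ R } is concave in R on the interval where it is defined. -/

import Mathlib

open Finset

section IT
variable {Ω : Type} [Fintype Ω]

/-- Probability that random variable `X` takes the value `x` under pmf `p`. -/
def pm {α : Type} [Fintype α] [DecidableEq α] (p : Ω → ℝ) (X : Ω → α) (x : α) : ℝ :=
  ∑ ω, if X ω = x then p ω else 0

/-- Shannon entropy (in bits) of random variable `X` under pmf `p`. -/
noncomputable def ent {α : Type} [Fintype α] [DecidableEq α] (p : Ω → ℝ) (X : Ω → α) : ℝ :=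
  -∑ x, pm p X x * Real.logb 2 (pm p X x)

/-- Mutual information `I(X;Y)` (in bits). -/
noncomputable def mi {α β : Type} [Fintype α] [DecidableEq α] [Fintype β] [DecidableEq β]
    (p : Ω → ℝ) (X : Ω → α) (Y : Ω → β) : ℝ :=
  ent p X + ent p Y - ent p (fun ω => (X ω, Y ω))

/-- Conditional entropy `H(X | Y)` (in bits). -/
noncomputable def condEnt {α β : Type} [Fintype α] [DecidableEq α] [Fintype β] [DecidableEq β]
    (p : Ω → ℝ) (X : Ω → α) (Y : Ω → β) : ℝ :=
  ent p (fun ω => (X ω, Y ω)) - ent p Y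

/-- Conditional mutual information `I(X;Y | Z)` (in bits). -/
noncomputable def cmi {α β γ : Type} [Fintype α] [DecidableEq α] [Fintype β] [DecidableEq β]
    [Fintype γ] [DecidableEq γ] (p : Ω → ℝ) (X : Ω → α) (Y : Ω → β) (Z : Ω → γ) : ℝ :=
  ent p (fun ω => (X ω, Z ω)) + ent p (fun ω => (Y ω, Z ω))
    - ent p (fun ω => (X ω, Y ω, Z ω)) - ent p Z

/-- `p` is a probability mass function on the finite sample space `Ω`. -/
def IsPMF (p : Ω → ℝ) : Prop := (∀ ω, 0 ≤ p ω) ∧ ∑ ω, p ω = 1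

/-- `X` and `Z` are conditionally independent given `Y` (i.e. `X → Y → Z` is a Markov chain). -/
def CondIndep {α β γ : Type} [Fintype α] [DecidableEq α] [Fintype β] [DecidableEq β]
    [Fintype γ] [DecidableEq γ] (p : Ω → ℝ) (X : Ω → α) (Z : Ω → γ) (Y : Ω → β) : Prop :=
  ∀ x z y, pm p (fun ω => (X ω, Z ω, Y ω)) (x, z, y) * pm p Y y =
    pm p (fun ω => (X ω, Y ω)) (x, y) * pm p (fun ω => (Z ω, Y ω)) (z, y)

end IT

section Wyner
variable {χ γ ζ : Type} [Fintype χ] [DecidableEq χ] [Fintype γ] [DecidableEq γ]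
  [Fintype ζ] [DecidableEq ζ]

/-- `P` is a probability distribution on the finite alphabet `α`. -/
def IsDist {α : Type} [Fintype α] (P : α → ℝ) : Prop := (∀ a, 0 ≤ P a) ∧ ∑ a, P a = 1

/-- Joint distribution `P_X(x)·Q_M(y|x)·Q_W(z|y)` of the degraded cascade `X → Y → Z`. -/
noncomputable def jointP (P : χ → ℝ) (QM : χ → γ → ℝ) (QW : γ → ζ → ℝ) : χ × γ × ζ → ℝ :=
  fun w => P w.1 * QM w.1 w.2.1 * QW w.2.1 w.2.2

/-- `I(X;Y)` under input distribution `P`. -/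
noncomputable def miXY (P : χ → ℝ) (QM : χ → γ → ℝ) (QW : γ → ζ → ℝ) : ℝ :=
  mi (jointP P QM QW) (fun w => w.1) (fun w => w.2.1)

/-- `I(X;Z)` under input distribution `P`. -/
noncomputable def miXZ (P : χ → ℝ) (QM : χ → γ → ℝ) (QW : γ → ζ → ℝ) : ℝ :=
  mi (jointP P QM QW) (fun w => w.1) (fun w => w.2.2)

/-- The constraint set of Wyner's function: values `I(X;Y) − I(X;Z)` over input
distributions `P_X` with `I(X;Y) ≥ R`. -/
def GammaSet (QM : χ → γ → ℝ) (QW : γ → ζ → ℝ) (R : ℝ) : Set ℝ :=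
  {v | ∃ P : χ → ℝ, IsDist P ∧ miXY P QM QW ≥ R ∧ v = miXY P QM QW - miXZ P QM QW}

/-- Wyner's function `Γ[R] = max{I(X;Y) − I(X;Z) : I(X;Y) ≥ R}`. -/
noncomputable def Gamma (QM : χ → γ → ℝ) (QW : γ → ζ → ℝ) (R : ℝ) : ℝ :=
  sSup (GammaSet QM QW R)

end Wyner

namespace Wyn
variable {ι : Type} [Fintype ι]

/-- Log-sum inequality. -/
lemma log_sum (a b : ι → ℝ) (ha : ∀ i, 0 ≤ a i) (hb : ∀ i, 0 ≤ b i)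
    (hab : ∀ i, b i = 0 → a i = 0) :
    (∑ i, a i) * Real.log ((∑ i, a i) / (∑ i, b i)) ≤ ∑ i, a i * Real.log (a i / b i) := by
  by_cases hB : ∑ i, b i = 0
  · have hb0 : ∀ i ∈ univ, b i = 0 := by
      intro i _
      exact le_antisymm (hB ▸ Finset.single_le_sum (fun j _ => hb j) (mem_univ i)) (hb i)
    have ha0 : ∀ i, a i = 0 := fun i => hab i (hb0 i (mem_univ i))
    simp [ha0]
  · have hBpos : 0 < ∑ i, b i := lt_of_le_of_ne (Finset.sum_nonneg fun i _ => hb i) (Ne.symm hB)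
    set B := ∑ i, b i with hBdef
    have h := Real.convexOn_mul_log.map_sum_le (t := univ) (w := fun i => b i / B)
      (p := fun i => a i / b i)
      (fun i _ => div_nonneg (hb i) hBpos.le)
      (by rw [← Finset.sum_div]; field_simp; exact hBdef.symm)
      (fun i _ => Set.mem_Ici.2 (div_nonneg (ha i) (hb i)))
    have hsum : ∑ i, (b i / B) • (a i / b i) = (∑ i, a i) / B := by
      rw [Finset.sum_div]
      refine Finset.sum_congr rfl fun i _ => ?_
      by_cases hbi : b i = 0
      · simp [hbi, hab i hbi]
      · field_simp
        rw [smul_eq_mul, div_mul_div_comm, mul_comm (b i) (a i), mul_div_mul_right _ _ hbi]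
        field_simp
    rw [hsum] at h
    have h2 : ∑ i, (b i / B) • ((a i / b i) * Real.log (a i / b i))
        = (∑ i, a i * Real.log (a i / b i)) / B := by
      rw [Finset.sum_div]
      refine Finset.sum_congr rfl fun i _ => ?_
      by_cases hbi : b i = 0
      · simp [hbi, hab i hbi]
      · field_simp
        rw [smul_eq_mul, div_mul_div_comm, mul_comm (b i) (a i * Real.log (a i / b i)),
          mul_div_mul_right _ _ hbi]
        field_simp
    rw [h2] at h
    calc (∑ i, a i) * Real.log ((∑ i, a i) / B)
        = B * ((∑ i, a i) / B * Real.log ((∑ i, a i) / B)) := by field_simp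
      _ ≤ B * ((∑ i, a i * Real.log (a i / b i)) / B) := by
          exact mul_le_mul_of_nonneg_left h hBpos.le
      _ = ∑ i, a i * Real.log (a i / b i) := by field_simp


variable {κ : Type} [Fintype κ]

/-- Gibbs: KL divergence is nonnegative. -/
lemma gibbs (p q : ι → ℝ) (hp : ∀ i, 0 ≤ p i) (hq : ∀ i, 0 ≤ q i)
    (hsum : ∑ i, p i = ∑ i, q i) (hpq : ∀ i, q i = 0 → p i = 0) :
    0 ≤ ∑ i, p i * Real.log (p i / q i) := by
  have h := log_sum p q hp hq hpq
  rw [hsum] at h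
  rcases eq_or_ne (∑ i, q i) 0 with hq0 | hq0
  · simpa [hq0] using h
  · rw [div_self hq0, Real.log_one, mul_zero] at h
    exact h

/-- Data processing for KL divergence. -/
lemma dpi (p q : ι → ℝ) (W : ι → κ → ℝ) (hp : ∀ i, 0 ≤ p i) (hq : ∀ i, 0 ≤ q i)
    (hW : ∀ i, (∀ k, 0 ≤ W i k) ∧ ∑ k, W i k = 1) (hpq : ∀ i, q i = 0 → p i = 0) :
    ∑ k, (∑ i, p i * W i k) * Real.log ((∑ i, p i * W i k) / (∑ i, q i * W i k))
      ≤ ∑ i, p i * Real.log (p i / q i) := by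
  have step : ∀ k, (∑ i, p i * W i k) * Real.log ((∑ i, p i * W i k) / (∑ i, q i * W i k))
      ≤ ∑ i, p i * W i k * Real.log (p i / q i) := by
    intro k
    have h := log_sum (fun i => p i * W i k) (fun i => q i * W i k)
      (fun i => mul_nonneg (hp i) ((hW i).1 k)) (fun i => mul_nonneg (hq i) ((hW i).1 k))
      (fun i hz => by
        rcases mul_eq_zero.1 hz with h0 | h0
        · rw [hpq i h0, zero_mul]
        · rw [h0, mul_zero])
    refine h.trans_eq (Finset.sum_congr rfl fun i _ => ?_)
    by_cases hWi : W i k = 0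
    · simp [hWi]
    · by_cases hpi : p i = 0
      · simp [hpi]
      · have hqi : q i ≠ 0 := fun h0 => hpi (hpq i h0)
        rw [mul_div_mul_right _ _ hWi]
  calc ∑ k, (∑ i, p i * W i k) * Real.log ((∑ i, p i * W i k) / (∑ i, q i * W i k))
      ≤ ∑ k, ∑ i, p i * W i k * Real.log (p i / q i) :=
        Finset.sum_le_sum fun k _ => step k
    _ = ∑ i, p i * Real.log (p i / q i) := by
        rw [Finset.sum_comm]
        refine Finset.sum_congr rfl fun i _ => ?_
        have : ∀ k, p i * W i k * Real.log (p i / q i)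
            = W i k * (p i * Real.log (p i / q i)) := fun k => by ring
        simp only [this]
        rw [← Finset.sum_mul, (hW i).2, one_mul]

end Wyn
set_option linter.unusedSectionVars false
namespace Wyn
open Finset
variable {χ γ ζ : Type} [Fintype χ] [DecidableEq χ] [Fintype γ] [DecidableEq γ]
  [Fintype ζ] [DecidableEq ζ]

noncomputable def PY (P : χ → ℝ) (QM : χ → γ → ℝ) : γ → ℝ := fun y => ∑ x, P x * QM x y
noncomputable def KC (QM : χ → γ → ℝ) (QW : γ → ζ → ℝ) : χ → ζ → ℝ :=
  fun x z => ∑ y, QM x y * QW y z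
noncomputable def PZ (P : χ → ℝ) (QM : χ → γ → ℝ) (QW : γ → ζ → ℝ) : ζ → ℝ :=
  fun z => ∑ y, PY P QM y * QW y z

section PM
variable (P : χ → ℝ) (QM : χ → γ → ℝ) (QW : γ → ζ → ℝ)
  (hQM : ∀ x, IsDist (QM x)) (hQW : ∀ y, IsDist (QW y))
include hQM hQW

lemma pm_X (x : χ) : pm (jointP P QM QW) (fun w => w.1) x = P x := by
  simp only [pm, jointP, Fintype.sum_prod_type]
  have h1 : ∀ a b, (∑ c, if a = x then P a * QM a b * QW b c else 0)
      = (if a = x then P a * QM a b else 0) := by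
    intro a b; split
    · rw [← Finset.mul_sum, (hQW b).2, mul_one]
    · simp
  simp only [h1]
  have h2 : ∀ a, (∑ b, if a = x then P a * QM a b else 0) = (if a = x then P a else 0) := by
    intro a; split
    · rw [← Finset.mul_sum, (hQM a).2, mul_one]
    · simp
  simp only [h2, Finset.sum_ite_eq' univ x, mem_univ, if_true]

lemma pm_Y (y : γ) : pm (jointP P QM QW) (fun w => w.2.1) y = PY P QM y := by
  simp only [pm, jointP, Fintype.sum_prod_type, PY]
  have h1 : ∀ a b, (∑ c, if b = y then P a * QM a b * QW b c else 0)
      = (if b = y then P a * QM a b else 0) := by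
    intro a b; split
    · rw [← Finset.mul_sum, (hQW b).2, mul_one]
    · simp
  simp only [h1, Finset.sum_ite_eq' univ y, mem_univ, if_true]

lemma pm_XY (x : χ) (y : γ) :
    pm (jointP P QM QW) (fun w => (w.1, w.2.1)) (x, y) = P x * QM x y := by
  simp only [pm, jointP, Fintype.sum_prod_type, Prod.mk.injEq, ite_and]
  have h1 : ∀ a b, (∑ c, if a = x then if b = y then P a * QM a b * QW b c else 0 else 0)
      = (if a = x then if b = y then P a * QM a b else 0 else 0) := by
    intro a b; split
    · split
      · rw [← Finset.mul_sum, (hQW b).2, mul_one]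
      · simp
    · simp
  simp only [h1]
  have h2 : ∀ a, (∑ b, if a = x then if b = y then P a * QM a b else 0 else 0)
      = (if a = x then P a * QM a y else 0) := by
    intro a; split
    · simp [Finset.sum_ite_eq', mem_univ]
    · simp
  simp only [h2, Finset.sum_ite_eq' univ x, mem_univ, if_true]

lemma pm_Z (z : ζ) : pm (jointP P QM QW) (fun w => w.2.2) z = PZ P QM QW z := by
  simp only [pm, jointP, Fintype.sum_prod_type, PZ, PY, Finset.sum_ite_eq', mem_univ, if_true]
  rw [Finset.sum_comm]
  exact Finset.sum_congr rfl fun b _ => (Finset.sum_mul _ _ _).symm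

lemma pm_XZ (x : χ) (z : ζ) :
    pm (jointP P QM QW) (fun w => (w.1, w.2.2)) (x, z) = P x * KC QM QW x z := by
  simp only [pm, jointP, Fintype.sum_prod_type, Prod.mk.injEq, ite_and]
  have h1 : ∀ a b, (∑ c, if a = x then if c = z then P a * QM a b * QW b c else 0 else 0)
      = (if a = x then P a * QM a b * QW b z else 0) := by
    intro a b; split
    · simp [Finset.sum_ite_eq', mem_univ]
    · simp
  simp only [h1]
  have h2 : ∀ a, (∑ b, if a = x then P a * QM a b * QW b z else 0)
      = (if a = x then ∑ b, P a * QM a b * QW b z else 0) := by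
    intro a; split <;> simp
  simp only [h2, Finset.sum_ite_eq' univ x, mem_univ, if_true, KC, Finset.mul_sum]
  exact Finset.sum_congr rfl fun b _ => by ring

end PM
end Wyn
namespace Wyn
open Finset
variable {ι κ : Type} [Fintype ι] [Fintype κ]

noncomputable def nent (f : ι → ℝ) : ℝ := -∑ i, f i * Real.log (f i)

noncomputable def klSum (p q : ι → ℝ) : ℝ := ∑ i, p i * Real.log (p i / q i)

lemma mul_log_mul (s t : ℝ) :
    s * t * Real.log (s * t) = t * (s * Real.log s) + s * (t * Real.log t) := by
  rcases eq_or_ne s 0 with rfl | hs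
  · simp
  rcases eq_or_ne t 0 with rfl | ht
  · simp
  rw [Real.log_mul hs ht]; ring

/-- Chain rule for entropy of a joint `u(a)·v(a,b)`. -/
lemma nent_chain (u : ι → ℝ) (v : ι → κ → ℝ) (hv : ∀ a, ∑ b, v a b = 1) :
    nent (fun ab : ι × κ => u ab.1 * v ab.1 ab.2) = nent u + ∑ a, u a * nent (v a) := by
  simp only [nent, Fintype.sum_prod_type]
  have h : ∀ a, ∑ b, u a * v a b * Real.log (u a * v a b)
      = (u a * Real.log (u a)) + u a * ∑ b, v a b * Real.log (v a b) := by
    intro a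
    simp only [mul_log_mul]
    rw [Finset.sum_add_distrib, ← Finset.sum_mul, hv a, one_mul, ← Finset.mul_sum]
  simp only [h]
  rw [Finset.sum_add_distrib, neg_add]
  congr 1
  rw [← Finset.sum_neg_distrib]
  exact Finset.sum_congr rfl fun a _ => (mul_neg _ _).symm

/-- KL decomposition of mixture entropy. -/
lemma nent_mix (q₁ q₂ : ι → ℝ) (l m : ℝ) (hl : 0 < l) (hm : 0 < m)
    (h1 : ∀ i, 0 ≤ q₁ i) (h2 : ∀ i, 0 ≤ q₂ i) :
    nent (fun i => l * q₁ i + m * q₂ i) - (l * nent q₁ + m * nent q₂)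
      = l * klSum q₁ (fun i => l * q₁ i + m * q₂ i)
        + m * klSum q₂ (fun i => l * q₁ i + m * q₂ i) := by
  set q : ι → ℝ := fun i => l * q₁ i + m * q₂ i with hq
  have key : ∀ i, l * (q₁ i * Real.log (q₁ i / q i)) + m * (q₂ i * Real.log (q₂ i / q i))
      = l * (q₁ i * Real.log (q₁ i)) + m * (q₂ i * Real.log (q₂ i)) - q i * Real.log (q i) := by
    intro i
    rcases eq_or_ne (q i) 0 with h0 | h0
    · have h0' : l * q₁ i + m * q₂ i = 0 := h0
      have e1 : l * q₁ i = 0 := by nlinarith [mul_nonneg hl.le (h1 i), mul_nonneg hm.le (h2 i)]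
      have e2 : m * q₂ i = 0 := by nlinarith [mul_nonneg hl.le (h1 i), mul_nonneg hm.le (h2 i)]
      have hq1 : q₁ i = 0 := (mul_eq_zero.1 e1).resolve_left hl.ne'
      have hq2 : q₂ i = 0 := (mul_eq_zero.1 e2).resolve_left hm.ne'
      simp [hq1, hq2, h0]
    · have hd : ∀ c : ℝ, 0 ≤ c → c * Real.log (c / q i) = c * Real.log c - c * Real.log (q i) := by
        intro c hc
        rcases eq_or_ne c 0 with rfl | hc0
        · simp
        · rw [Real.log_div hc0 h0]; ring
      rw [hd _ (h1 i), hd _ (h2 i)]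
      simp only [hq]
      ring
  have S : ∑ i, (l * (q₁ i * Real.log (q₁ i / q i)) + m * (q₂ i * Real.log (q₂ i / q i)))
      = ∑ i, (l * (q₁ i * Real.log (q₁ i)) + m * (q₂ i * Real.log (q₂ i)) - q i * Real.log (q i)) :=
    Finset.sum_congr rfl fun i _ => key i
  simp only [Finset.sum_add_distrib, Finset.sum_sub_distrib, ← Finset.mul_sum] at S
  simp only [nent, klSum]
  linarith [S]

end Wyn
namespace Wyn
open Finset

lemma ent_nent {Ω : Type} [Fintype Ω] {α : Type} [Fintype α] [DecidableEq α]
    (p : Ω → ℝ) (X : Ω → α) :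
    ent p X = (Real.log 2)⁻¹ * nent (fun x => pm p X x) := by
  rw [ent, nent, mul_neg, neg_inj, Finset.mul_sum]
  refine Finset.sum_congr rfl fun x _ => ?_
  rw [Real.logb, div_eq_inv_mul]
  ring

lemma mix_zero {l m a b : ℝ} (hl : 0 < l) (hm : 0 < m) (ha : 0 ≤ a) (hb : 0 ≤ b)
    (h : l * a + m * b = 0) : a = 0 := by
  have e1 : l * a = 0 := by nlinarith [mul_nonneg hl.le ha, mul_nonneg hm.le hb]
  exact (mul_eq_zero.1 e1).resolve_left hl.ne'

lemma nent_nonneg {ι : Type} [Fintype ι] (f : ι → ℝ) (hf : ∀ i, 0 ≤ f i)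
    (hs : ∑ i, f i = 1) : 0 ≤ nent f := by
  rw [nent, neg_nonneg]
  refine Finset.sum_nonpos fun i _ => Real.mul_log_nonpos (hf i) ?_
  calc f i ≤ ∑ j, f j := Finset.single_le_sum (fun j _ => hf j) (mem_univ i)
    _ = 1 := hs

lemma nent_le_card {ι : Type} [Fintype ι] (f : ι → ℝ) (hf : ∀ i, 0 ≤ f i) :
    nent f ≤ Fintype.card ι := by
  rw [nent, neg_le]
  calc (-(Fintype.card ι) : ℝ) = ∑ _i : ι, (-1 : ℝ) := by simp
    _ ≤ ∑ i, f i * Real.log (f i) := by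
        refine Finset.sum_le_sum fun i _ => ?_
        rcases eq_or_lt_of_le (hf i) with h0 | h0
        · simp [← h0]
        · have h := Real.log_le_sub_one_of_pos (inv_pos.2 h0)
          rw [Real.log_inv] at h
          have : -(f i * Real.log (f i)) ≤ f i * ((f i)⁻¹ - 1) := by
            rw [← mul_neg]
            exact mul_le_mul_of_nonneg_left h (hf i)
          have h2 : f i * ((f i)⁻¹ - 1) = 1 - f i := by field_simp
          nlinarith [hf i]

section Wyner2
variable {χ γ ζ : Type} [Fintype χ] [DecidableEq χ] [Fintype γ] [DecidableEq γ]
  [Fintype ζ] [DecidableEq ζ]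
  (P : χ → ℝ) (QM : χ → γ → ℝ) (QW : γ → ζ → ℝ)
  (hQM : ∀ x, IsDist (QM x)) (hQW : ∀ y, IsDist (QW y))

lemma PZ_eq_PYW : PZ P QM QW = fun z => ∑ y, PY P QM y * QW y z := rfl

include hQM hQW

lemma KC_rowsum : ∀ x, ∑ z, KC QM QW x z = 1 := by
  intro x
  have h1 : ∑ z, KC QM QW x z = ∑ y, ∑ z, QM x y * QW y z := by
    simp only [KC]
    rw [Finset.sum_comm]
  rw [h1]
  calc ∑ y, ∑ z, QM x y * QW y z = ∑ y, QM x y := by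
        refine Finset.sum_congr rfl fun y _ => ?_
        rw [← Finset.mul_sum, (hQW y).2, mul_one]
    _ = 1 := (hQM x).2

lemma miXY_eq : miXY P QM QW
    = (Real.log 2)⁻¹ * (nent (PY P QM) - ∑ x, P x * nent (QM x)) := by
  rw [miXY, mi, ent_nent, ent_nent, ent_nent]
  have e1 : (fun x => pm (jointP P QM QW) (fun w => w.1) x) = P :=
    funext fun x => pm_X P QM QW hQM hQW x
  have e2 : (fun y => pm (jointP P QM QW) (fun w => w.2.1) y) = PY P QM :=
    funext fun y => pm_Y P QM QW hQM hQW y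
  have e3 : (fun q : χ × γ => pm (jointP P QM QW) (fun w => (w.1, w.2.1)) q)
      = (fun q : χ × γ => P q.1 * QM q.1 q.2) :=
    funext fun q => by obtain ⟨x, y⟩ := q; exact pm_XY P QM QW hQM hQW x y
  rw [e1, e2, e3, nent_chain P QM fun a => (hQM a).2]
  ring

lemma miXZ_eq : miXZ P QM QW
    = (Real.log 2)⁻¹ * (nent (PZ P QM QW) - ∑ x, P x * nent (KC QM QW x)) := by
  rw [miXZ, mi, ent_nent, ent_nent, ent_nent]
  have e1 : (fun x => pm (jointP P QM QW) (fun w => w.1) x) = P :=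
    funext fun x => pm_X P QM QW hQM hQW x
  have e2 : (fun z => pm (jointP P QM QW) (fun w => w.2.2) z) = PZ P QM QW :=
    funext fun z => pm_Z P QM QW hQM hQW z
  have e3 : (fun q : χ × ζ => pm (jointP P QM QW) (fun w => (w.1, w.2.2)) q)
      = (fun q : χ × ζ => P q.1 * KC QM QW q.1 q.2) :=
    funext fun q => by obtain ⟨x, z⟩ := q; exact pm_XZ P QM QW hQM hQW x z
  rw [e1, e2, e3, nent_chain P (KC QM QW) (KC_rowsum QM QW hQM hQW)]
  ring

lemma isDist_PY (hP : IsDist P) : IsDist (PY P QM) := by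
  constructor
  · intro y
    exact Finset.sum_nonneg fun x _ => mul_nonneg (hP.1 x) ((hQM x).1 y)
  · have h1 : ∑ y, PY P QM y = ∑ x, ∑ y, P x * QM x y := by
      simp only [PY]
      rw [Finset.sum_comm]
    have h2 : ∑ x, ∑ y, P x * QM x y = ∑ x, P x * ∑ y, QM x y :=
      Finset.sum_congr rfl fun x _ => by rw [Finset.mul_sum]
    rw [h1, h2]
    calc ∑ x, P x * ∑ y, QM x y = ∑ x, P x :=
          Finset.sum_congr rfl fun x _ => by rw [(hQM x).2, mul_one]
      _ = 1 := hP.2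

end Wyner2
end Wyn
namespace Wyn
open Finset

section Core
variable {ι κ : Type} [Fintype ι] [Fintype κ]

/-- Pushforward of a vector through a channel. -/
noncomputable def pushW (p : ι → ℝ) (W : ι → κ → ℝ) : κ → ℝ := fun k => ∑ i, p i * W i k

lemma isDist_pushW (p : ι → ℝ) (W : ι → κ → ℝ) (hp : IsDist p) (hW : ∀ i, IsDist (W i)) :
    IsDist (pushW p W) := by
  constructor
  · intro k
    exact Finset.sum_nonneg fun i _ => mul_nonneg (hp.1 i) ((hW i).1 k)
  · have h1 : ∑ k, pushW p W k = ∑ i, ∑ k, p i * W i k := by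
      simp only [pushW]
      rw [Finset.sum_comm]
    rw [h1]
    calc ∑ i, ∑ k, p i * W i k = ∑ i, p i := by
          refine Finset.sum_congr rfl fun i _ => ?_
          rw [← Finset.mul_sum, (hW i).2, mul_one]
      _ = 1 := hp.2

lemma pushW_mix (q₁ q₂ : ι → ℝ) (W : ι → κ → ℝ) (l m : ℝ) :
    pushW (fun i => l * q₁ i + m * q₂ i) W
      = fun k => l * pushW q₁ W k + m * pushW q₂ W k := by
  funext k
  simp only [pushW, add_mul, mul_assoc, Finset.sum_add_distrib, Finset.mul_sum]

lemma sum_mix (q₁ q₂ : ι → ℝ) (hq₁ : IsDist q₁) (hq₂ : IsDist q₂) (l m : ℝ) (hlm : l + m = 1) :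
    ∑ i, (l * q₁ i + m * q₂ i) = 1 := by
  rw [Finset.sum_add_distrib, ← Finset.mul_sum, ← Finset.mul_sum, hq₁.2, hq₂.2, mul_one, mul_one,
    hlm]

/-- Concavity of entropy along mixtures. -/
lemma mix_coreA (q₁ q₂ : ι → ℝ) (hq₁ : IsDist q₁) (hq₂ : IsDist q₂)
    (l m : ℝ) (hl : 0 < l) (hm : 0 < m) (hlm : l + m = 1) :
    l * nent q₁ + m * nent q₂ ≤ nent (fun i => l * q₁ i + m * q₂ i) := by
  have hmix := nent_mix q₁ q₂ l m hl hm hq₁.1 hq₂.1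
  have hqnn : ∀ i, 0 ≤ l * q₁ i + m * q₂ i :=
    fun i => add_nonneg (mul_nonneg hl.le (hq₁.1 i)) (mul_nonneg hm.le (hq₂.1 i))
  have hsum : ∑ i, (l * q₁ i + m * q₂ i) = 1 := sum_mix q₁ q₂ hq₁ hq₂ l m hlm
  have g1 : 0 ≤ klSum q₁ (fun i => l * q₁ i + m * q₂ i) :=
    gibbs _ _ hq₁.1 hqnn (by rw [hq₁.2, hsum]) (fun i h0 => mix_zero hl hm (hq₁.1 i) (hq₂.1 i) h0)
  have g2 : 0 ≤ klSum q₂ (fun i => l * q₁ i + m * q₂ i) :=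
    gibbs _ _ hq₂.1 hqnn (by rw [hq₂.2, hsum])
      (fun i h0 => by
        have h0' : l * q₁ i + m * q₂ i = 0 := h0
        exact mix_zero hm hl (hq₂.1 i) (hq₁.1 i) (by linarith))
  nlinarith [mul_nonneg hl.le g1, mul_nonneg hm.le g2]

/-- The mixture gain in `H(input) - H(output)` is nonnegative (data processing). -/
lemma mix_coreB (q₁ q₂ : ι → ℝ) (W : ι → κ → ℝ) (hq₁ : IsDist q₁) (hq₂ : IsDist q₂)
    (hW : ∀ i, IsDist (W i)) (l m : ℝ) (hl : 0 < l) (hm : 0 < m) (hlm : l + m = 1) :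
    l * (nent q₁ - nent (pushW q₁ W)) + m * (nent q₂ - nent (pushW q₂ W))
      ≤ nent (fun i => l * q₁ i + m * q₂ i)
        - nent (pushW (fun i => l * q₁ i + m * q₂ i) W) := by
  have hmix := nent_mix q₁ q₂ l m hl hm hq₁.1 hq₂.1
  have hr₁ := isDist_pushW q₁ W hq₁ hW
  have hr₂ := isDist_pushW q₂ W hq₂ hW
  have hmixW := nent_mix (pushW q₁ W) (pushW q₂ W) l m hl hm hr₁.1 hr₂.1
  rw [pushW_mix]
  -- data processing for each component
  have hd1 : klSum (pushW q₁ W) (fun k => l * pushW q₁ W k + m * pushW q₂ W k)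
      ≤ klSum q₁ (fun i => l * q₁ i + m * q₂ i) := by
    have h := dpi q₁ (fun i => l * q₁ i + m * q₂ i) W hq₁.1
      (fun i => add_nonneg (mul_nonneg hl.le (hq₁.1 i)) (mul_nonneg hm.le (hq₂.1 i)))
      (fun i => ⟨(hW i).1, (hW i).2⟩)
      (fun i h0 => mix_zero hl hm (hq₁.1 i) (hq₂.1 i) h0)
    refine le_trans (le_of_eq ?_) h
    rw [klSum]
    refine Finset.sum_congr rfl fun k _ => ?_
    have e : (∑ i, (l * q₁ i + m * q₂ i) * W i k)
        = l * (∑ i, q₁ i * W i k) + m * (∑ i, q₂ i * W i k) := by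
      simp only [add_mul, mul_assoc, Finset.sum_add_distrib, Finset.mul_sum]
    simp only [pushW]
    rw [e]
  have hd2 : klSum (pushW q₂ W) (fun k => l * pushW q₁ W k + m * pushW q₂ W k)
      ≤ klSum q₂ (fun i => l * q₁ i + m * q₂ i) := by
    have h := dpi q₂ (fun i => l * q₁ i + m * q₂ i) W hq₂.1
      (fun i => add_nonneg (mul_nonneg hl.le (hq₁.1 i)) (mul_nonneg hm.le (hq₂.1 i)))
      (fun i => ⟨(hW i).1, (hW i).2⟩)
      (fun i h0 => by
        have h0' : l * q₁ i + m * q₂ i = 0 := h0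
        exact mix_zero hm hl (hq₂.1 i) (hq₁.1 i) (by linarith))
    refine le_trans (le_of_eq ?_) h
    rw [klSum]
    refine Finset.sum_congr rfl fun k _ => ?_
    have e : (∑ i, (l * q₁ i + m * q₂ i) * W i k)
        = l * (∑ i, q₁ i * W i k) + m * (∑ i, q₂ i * W i k) := by
      simp only [add_mul, mul_assoc, Finset.sum_add_distrib, Finset.mul_sum]
    simp only [pushW]
    rw [e]
  nlinarith [mul_nonneg hl.le (sub_nonneg.2 hd1), mul_nonneg hm.le (sub_nonneg.2 hd2)]

end Core
end Wyn
namespace Wyn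
open Finset

section Final
variable {χ γ ζ : Type} [Fintype χ] [DecidableEq χ] [Fintype γ] [DecidableEq γ]
  [Fintype ζ] [DecidableEq ζ]
  (QM : χ → γ → ℝ) (QW : γ → ζ → ℝ)
  (hQM : ∀ x, IsDist (QM x)) (hQW : ∀ y, IsDist (QW y))

lemma lin_mix (P₁ P₂ : χ → ℝ) (l m : ℝ) (f : χ → ℝ) :
    ∑ x, (l * P₁ x + m * P₂ x) * f x = l * ∑ x, P₁ x * f x + m * ∑ x, P₂ x * f x := by
  simp only [add_mul, mul_assoc, Finset.sum_add_distrib, Finset.mul_sum]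

include hQM hQW

lemma isDist_KC (x : χ) : IsDist (KC QM QW x) := by
  constructor
  · intro z
    exact Finset.sum_nonneg fun y _ => mul_nonneg ((hQM x).1 y) ((hQW y).1 z)
  · exact KC_rowsum QM QW hQM hQW x

lemma gamma_bdd (R : ℝ) : BddAbove (GammaSet QM QW R) := by
  have hc : (0:ℝ) ≤ (Real.log 2)⁻¹ := inv_nonneg.2 (Real.log_nonneg one_le_two)
  refine ⟨(Real.log 2)⁻¹ * ((Fintype.card γ : ℝ) + (Fintype.card ζ : ℝ)), ?_⟩
  rintro v ⟨P, hP, -, rfl⟩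
  rw [miXY_eq P QM QW hQM hQW, miXZ_eq P QM QW hQM hQW]
  have hPY : IsDist (PY P QM) := isDist_pushW P QM hP hQM
  have hPZ : IsDist (PZ P QM QW) := isDist_pushW (pushW P QM) QW hPY hQW
  have h1 : nent (PY P QM) ≤ (Fintype.card γ : ℝ) := nent_le_card _ hPY.1
  have h2 : (0:ℝ) ≤ nent (PZ P QM QW) := nent_nonneg _ hPZ.1 hPZ.2
  have h3 : (0:ℝ) ≤ ∑ x, P x * nent (QM x) :=
    Finset.sum_nonneg fun x _ =>
      mul_nonneg (hP.1 x) (nent_nonneg _ (hQM x).1 (hQM x).2)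
  have h4 : ∑ x, P x * nent (KC QM QW x) ≤ (Fintype.card ζ : ℝ) := by
    calc ∑ x, P x * nent (KC QM QW x) ≤ ∑ x, P x * (Fintype.card ζ : ℝ) :=
          Finset.sum_le_sum fun x _ =>
            mul_le_mul_of_nonneg_left (nent_le_card _ (isDist_KC QM QW hQM hQW x).1) (hP.1 x)
      _ = (Fintype.card ζ : ℝ) := by rw [← Finset.sum_mul, hP.2, one_mul]
  have key : (nent (PY P QM) - ∑ x, P x * nent (QM x))
      - (nent (PZ P QM QW) - ∑ x, P x * nent (KC QM QW x))
      ≤ (Fintype.card γ : ℝ) + (Fintype.card ζ : ℝ) := by linarith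
  calc (Real.log 2)⁻¹ * (nent (PY P QM) - ∑ x, P x * nent (QM x))
        - (Real.log 2)⁻¹ * (nent (PZ P QM QW) - ∑ x, P x * nent (KC QM QW x))
      = (Real.log 2)⁻¹ * ((nent (PY P QM) - ∑ x, P x * nent (QM x))
          - (nent (PZ P QM QW) - ∑ x, P x * nent (KC QM QW x))) := by ring
    _ ≤ (Real.log 2)⁻¹ * ((Fintype.card γ : ℝ) + (Fintype.card ζ : ℝ)) :=
        mul_le_mul_of_nonneg_left key hc

lemma mixP (P₁ P₂ : χ → ℝ) (hP₁ : IsDist P₁) (hP₂ : IsDist P₂)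
    (l m : ℝ) (hl : 0 < l) (hm : 0 < m) (hlm : l + m = 1) :
    l * miXY P₁ QM QW + m * miXY P₂ QM QW
        ≤ miXY (fun x => l * P₁ x + m * P₂ x) QM QW ∧
    l * (miXY P₁ QM QW - miXZ P₁ QM QW) + m * (miXY P₂ QM QW - miXZ P₂ QM QW)
        ≤ miXY (fun x => l * P₁ x + m * P₂ x) QM QW
          - miXZ (fun x => l * P₁ x + m * P₂ x) QM QW := by
  have hc : (0:ℝ) ≤ (Real.log 2)⁻¹ := inv_nonneg.2 (Real.log_nonneg one_le_two)
  have hPY₁ : IsDist (PY P₁ QM) := isDist_pushW P₁ QM hP₁ hQM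
  have hPY₂ : IsDist (PY P₂ QM) := isDist_pushW P₂ QM hP₂ hQM
  have ePY : PY (fun x => l * P₁ x + m * P₂ x) QM
      = fun y => l * PY P₁ QM y + m * PY P₂ QM y := pushW_mix P₁ P₂ QM l m
  have ePZ : PZ (fun x => l * P₁ x + m * P₂ x) QM QW
      = pushW (fun y => l * PY P₁ QM y + m * PY P₂ QM y) QW := by
    have e0 : PZ (fun x => l * P₁ x + m * P₂ x) QM QW
        = pushW (PY (fun x => l * P₁ x + m * P₂ x) QM) QW := rfl
    rw [e0, ePY]
  have ePZ₁ : PZ P₁ QM QW = pushW (PY P₁ QM) QW := rfl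
  have ePZ₂ : PZ P₂ QM QW = pushW (PY P₂ QM) QW := rfl
  have coreA := mix_coreA (PY P₁ QM) (PY P₂ QM) hPY₁ hPY₂ l m hl hm hlm
  have coreB := mix_coreB (PY P₁ QM) (PY P₂ QM) QW hPY₁ hPY₂ hQW l m hl hm hlm
  rw [miXY_eq P₁ QM QW hQM hQW, miXY_eq P₂ QM QW hQM hQW,
    miXY_eq (fun x => l * P₁ x + m * P₂ x) QM QW hQM hQW,
    miXZ_eq P₁ QM QW hQM hQW, miXZ_eq P₂ QM QW hQM hQW,
    miXZ_eq (fun x => l * P₁ x + m * P₂ x) QM QW hQM hQW,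
    ePY, ePZ, ePZ₁, ePZ₂]
  have hlin1 : ∑ x, (l * P₁ x + m * P₂ x) * nent (QM x)
      = l * ∑ x, P₁ x * nent (QM x) + m * ∑ x, P₂ x * nent (QM x) :=
    lin_mix P₁ P₂ l m _
  have hlin2 : ∑ x, (l * P₁ x + m * P₂ x) * nent (KC QM QW x)
      = l * ∑ x, P₁ x * nent (KC QM QW x) + m * ∑ x, P₂ x * nent (KC QM QW x) :=
    lin_mix P₁ P₂ l m _
  rw [hlin1, hlin2]
  constructor
  · nlinarith [mul_nonneg hc (sub_nonneg.2 coreA)]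
  · rw [pushW_mix (PY P₁ QM) (PY P₂ QM) QW l m] at coreB ⊢
    nlinarith [mul_nonneg hc (sub_nonneg.2 coreB)]

end Final
end Wyn
/-- Wyner's function `Γ[R]` is concave on the interval where it is defined
(Lemma 1 of Wyner 1975). -/
theorem stmt5 {χ γ ζ : Type} [Fintype χ] [DecidableEq χ] [Fintype γ] [DecidableEq γ]
    [Fintype ζ] [DecidableEq ζ]
    (QM : χ → γ → ℝ) (QW : γ → ζ → ℝ)
    (hQM : ∀ x, IsDist (QM x)) (hQW : ∀ y, IsDist (QW y))
    (R₁ R₂ lam : ℝ) (hlam0 : 0 ≤ lam) (hlam1 : lam ≤ 1)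
    (h1 : (GammaSet QM QW R₁).Nonempty) (h2 : (GammaSet QM QW R₂).Nonempty) :
    Gamma QM QW (lam * R₁ + (1 - lam) * R₂)
      ≥ lam * Gamma QM QW R₁ + (1 - lam) * Gamma QM QW R₂ := by
  rcases hlam0.eq_or_lt with hz | hl
  · rw [← hz, show (0:ℝ) * R₁ + (1 - 0) * R₂ = R₂ by ring]
    norm_num
  rcases hlam1.eq_or_lt with ho | hmlt
  · rw [ho, show (1:ℝ) * R₁ + (1 - 1) * R₂ = R₁ by ring]
    norm_num
  have hmpos : (0:ℝ) < 1 - lam := by linarith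
  set m : ℝ := 1 - lam with hmdef
  have hlm : lam + m = 1 := by rw [hmdef]; ring
  set Rm : ℝ := lam * R₁ + m * R₂ with hRm
  have hbdd := Wyn.gamma_bdd QM QW hQM hQW Rm
  have key : ∀ v₁ ∈ GammaSet QM QW R₁, ∀ v₂ ∈ GammaSet QM QW R₂,
      lam * v₁ + m * v₂ ≤ Gamma QM QW Rm := by
    rintro v₁ ⟨P₁, hP₁, hR₁, rfl⟩ v₂ ⟨P₂, hP₂, hR₂, rfl⟩
    obtain ⟨hA, hB⟩ := Wyn.mixP QM QW hQM hQW P₁ P₂ hP₁ hP₂ lam m hl hmpos hlm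
    have hPm : IsDist (fun x => lam * P₁ x + m * P₂ x) :=
      ⟨fun x => add_nonneg (mul_nonneg hl.le (hP₁.1 x)) (mul_nonneg hmpos.le (hP₂.1 x)),
        Wyn.sum_mix P₁ P₂ hP₁ hP₂ lam m hlm⟩
    have hfeas : miXY (fun x => lam * P₁ x + m * P₂ x) QM QW ≥ Rm := by
      have e1 : lam * R₁ ≤ lam * miXY P₁ QM QW := mul_le_mul_of_nonneg_left hR₁ hl.le
      have e2 : m * R₂ ≤ m * miXY P₂ QM QW := mul_le_mul_of_nonneg_left hR₂ hmpos.le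
      rw [hRm]
      linarith
    have hmem : (miXY (fun x => lam * P₁ x + m * P₂ x) QM QW
        - miXZ (fun x => lam * P₁ x + m * P₂ x) QM QW) ∈ GammaSet QM QW Rm :=
      ⟨_, hPm, hfeas, rfl⟩
    exact le_trans hB (le_csSup hbdd hmem)
  have step2 : ∀ v₁ ∈ GammaSet QM QW R₁,
      lam * v₁ + m * Gamma QM QW R₂ ≤ Gamma QM QW Rm := by
    intro v₁ hv₁
    have h2' : Gamma QM QW R₂ ≤ (Gamma QM QW Rm - lam * v₁) / m :=
      csSup_le h2 fun v₂ hv₂ => (le_div_iff₀ hmpos).2 (by linarith [key v₁ hv₁ v₂ hv₂])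
    linarith [(le_div_iff₀ hmpos).1 h2']
  have h1' : Gamma QM QW R₁ ≤ (Gamma QM QW Rm - m * Gamma QM QW R₂) / lam :=
    csSup_le h1 fun v₁ hv₁ => (le_div_iff₀ hl).2 (by linarith [step2 v₁ hv₁])
  have hfin := (le_div_iff₀ hl).1 h1'
  linarith
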